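/- (Douglas-Rachford splitting, weakly monotone case.) Let η ∈ ℝⁿ be a positive vector. Let F, G : ℝⁿ → ℝⁿ be continuously differentiable, Lipschitz with respect to ‖·‖_{∞,η⁻¹}, with diagonal bounds d_F > 0 and d_G > 0 respectively, and with μ_{∞,η⁻¹}(−DF(x)) ≤ 0 and μ_{∞,η⁻¹}(−DG(x)) ≤ 0 for all x ∈ ℝⁿ. Suppose there exists x with F(x) + G(x) = 0, and let α ∈ (0, min{1/d_F, 1/d_G}]. Let sequences satisfy, for all k: x_{k+1/2} + αG(x_{k+1/2}) = z_k; z_{k+1/2} = 2x_{k+1/2} − z_k; x_{k+1} + αF(x_{k+1}) = z_{k+1/2}; z_{k+1} = z_k + x_{k+1} − x_{k+1/2}. Then (x_k) converges to some x* with F(x*) + G(x*) = 0. -/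

import Mathlib

open Filter

/-- Diagonally weighted ℓ∞ norm: ‖x‖_{∞,η⁻¹} = max_i |x_i|/η_i. -/
noncomputable def wNorm {n : ℕ} (η x : Fin n → ℝ) : ℝ := ⨆ i, |x i| / η i

/-- Diagonally weighted ℓ∞ logarithmic norm of a matrix. -/
noncomputable def logNorm {n : ℕ} (η : Fin n → ℝ) (A : Matrix (Fin n) (Fin n) ℝ) : ℝ :=
  ⨆ i, (A i i + ∑ j ∈ Finset.univ.erase i, (η j / η i) * |A i j|)

/-- Jacobian matrix of `F` at `x`: (DF(x))_{ij} = ∂F_i/∂x_j. -/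
noncomputable def jac {n : ℕ} (F : (Fin n → ℝ) → (Fin n → ℝ)) (x : Fin n → ℝ) :
    Matrix (Fin n) (Fin n) ℝ :=
  fun i j => fderiv ℝ F x (Pi.single j 1) i


section NormLemmas
variable {n : ℕ} {η : Fin n → ℝ}

lemma le_wNorm (hη : ∀ i, 0 < η i) (x : Fin n → ℝ) (i : Fin n) :
    |x i| / η i ≤ wNorm η x := by
  exact le_ciSup (Set.Finite.bddAbove (Set.finite_range (fun i => |x i| / η i))) i

lemma wNorm_nonneg (hη : ∀ i, 0 < η i) (x : Fin n → ℝ) : 0 ≤ wNorm η x := by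
  rcases isEmpty_or_nonempty (Fin n) with h | h
  · simp [wNorm, Real.iSup_of_isEmpty]
  · obtain ⟨i⟩ := h
    exact le_trans (div_nonneg (abs_nonneg _) (hη i).le) (le_wNorm hη x i)

lemma wNorm_le (hη : ∀ i, 0 < η i) {x : Fin n → ℝ} {r : ℝ} (hr : 0 ≤ r)
    (h : ∀ i, |x i| ≤ η i * r) : wNorm η x ≤ r := by
  rcases isEmpty_or_nonempty (Fin n) with he | he
  · simpa [wNorm, Real.iSup_of_isEmpty] using hr
  · exact ciSup_le fun i => (div_le_iff₀' (hη i)).2 (h i)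

lemma abs_le_wNorm (hη : ∀ i, 0 < η i) (x : Fin n → ℝ) (i : Fin n) :
    |x i| ≤ η i * wNorm η x := by
  have := le_wNorm hη x i
  rwa [div_le_iff₀ (hη i), mul_comm] at this

lemma wNorm_zero (hη : ∀ i, 0 < η i) : wNorm η (0 : Fin n → ℝ) = 0 := by
  refine le_antisymm (wNorm_le hη le_rfl fun i => by simp) (wNorm_nonneg hη 0)

lemma wNorm_add_le (hη : ∀ i, 0 < η i) (x y : Fin n → ℝ) :
    wNorm η (x + y) ≤ wNorm η x + wNorm η y := by
  refine wNorm_le hη (add_nonneg (wNorm_nonneg hη x) (wNorm_nonneg hη y)) fun i => ?_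
  calc |(x + y) i| ≤ |x i| + |y i| := abs_add_le _ _
    _ ≤ η i * wNorm η x + η i * wNorm η y := add_le_add (abs_le_wNorm hη x i) (abs_le_wNorm hη y i)
    _ = η i * (wNorm η x + wNorm η y) := by ring

lemma wNorm_neg (hη : ∀ i, 0 < η i) (x : Fin n → ℝ) : wNorm η (-x) = wNorm η x := by
  unfold wNorm; congr 1; funext i; simp

lemma wNorm_sub_comm (hη : ∀ i, 0 < η i) (x y : Fin n → ℝ) :
    wNorm η (x - y) = wNorm η (y - x) := by
  rw [← wNorm_neg hη (x - y), neg_sub]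

lemma wNorm_sub_le (hη : ∀ i, 0 < η i) (x y z : Fin n → ℝ) :
    wNorm η (x - z) ≤ wNorm η (x - y) + wNorm η (y - z) := by
  have : x - z = (x - y) + (y - z) := by abel
  rw [this]; exact wNorm_add_le hη _ _

lemma wNorm_smul (hη : ∀ i, 0 < η i) {c : ℝ} (hc : 0 ≤ c) (x : Fin n → ℝ) :
    wNorm η (c • x) = c * wNorm η x := by
  unfold wNorm
  rw [Real.mul_iSup_of_nonneg hc]
  congr 1; funext i
  simp [abs_mul, abs_of_nonneg hc, mul_div_assoc]

lemma norm_le_wNorm (hη : ∀ i, 0 < η i) (x : Fin n → ℝ) :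
    ‖x‖ ≤ (∑ i, η i) * wNorm η x := by
  have hC : 0 ≤ (∑ i, η i) := Finset.sum_nonneg fun i _ => (hη i).le
  refine (pi_norm_le_iff_of_nonneg (mul_nonneg hC (wNorm_nonneg hη x))).2 fun i => ?_
  calc ‖x i‖ = |x i| := rfl
    _ ≤ η i * wNorm η x := abs_le_wNorm hη x i
    _ ≤ (∑ j, η j) * wNorm η x := by
        apply mul_le_mul_of_nonneg_right _ (wNorm_nonneg hη x)
        exact Finset.single_le_sum (fun j _ => (hη j).le) (Finset.mem_univ i)

lemma wNorm_le_norm (hη : ∀ i, 0 < η i) (x : Fin n → ℝ) :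
    wNorm η x ≤ (∑ i, (η i)⁻¹) * ‖x‖ := by
  have hC : 0 ≤ (∑ i, (η i)⁻¹) := Finset.sum_nonneg fun i _ => (inv_nonneg.2 (hη i).le)
  refine wNorm_le hη (mul_nonneg hC (norm_nonneg x)) fun i => ?_
  have h1 : |x i| ≤ ‖x‖ := norm_le_pi_norm x i
  have h2 : (η i)⁻¹ ≤ ∑ j, (η j)⁻¹ :=
    Finset.single_le_sum (fun j _ => (inv_nonneg.2 (hη j).le)) (Finset.mem_univ i)
  calc |x i| = η i * ((η i)⁻¹ * |x i|) := by
        rw [← mul_assoc, mul_inv_cancel₀ (hη i).ne', one_mul]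
    _ ≤ η i * ((∑ j, (η j)⁻¹) * ‖x‖) := by
        apply mul_le_mul_of_nonneg_left _ (hη i).le
        exact mul_le_mul h2 h1 (abs_nonneg _) hC

end NormLemmas

section JacLemmas
variable {n : ℕ} {η : Fin n → ℝ}

lemma row_dominance (hη : ∀ i, 0 < η i) {A : Matrix (Fin n) (Fin n) ℝ}
    (h : logNorm η (-A) ≤ 0) (i : Fin n) :
    ∑ j ∈ Finset.univ.erase i, (η j / η i) * |A i j| ≤ A i i := by
  have hle : (-A) i i + ∑ j ∈ Finset.univ.erase i, (η j / η i) * |(-A) i j| ≤ logNorm η (-A) := by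
    exact le_ciSup (Set.Finite.bddAbove (Set.finite_range
      (fun i => (-A) i i + ∑ j ∈ Finset.univ.erase i, (η j / η i) * |(-A) i j|))) i
  have := hle.trans h
  simp only [Matrix.neg_apply, abs_neg] at this
  linarith

/-- Continuity of the Jacobian entries along a segment. -/
lemma jac_cont {F : (Fin n → ℝ) → (Fin n → ℝ)} (hF : ContDiff ℝ 1 F)
    (v w : Fin n → ℝ) (i j : Fin n) :
    Continuous fun t : ℝ => jac F (v + t • w) i j := by
  have h1 : Continuous fun y : Fin n → ℝ => fderiv ℝ F y := hF.continuous_fderiv one_ne_zero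
  have h2 : Continuous fun t : ℝ => v + t • w := by continuity
  have h3 : Continuous fun t : ℝ => (fderiv ℝ F (v + t • w)) (Pi.single j 1) :=
    Continuous.clm_apply (h1.comp h2) continuous_const
  exact (continuous_apply i).comp h3

lemma fderiv_apply_eq_sum {F : (Fin n → ℝ) → (Fin n → ℝ)} (hF : ContDiff ℝ 1 F)
    (y w : Fin n → ℝ) (i : Fin n) :
    (fderiv ℝ F y w) i = ∑ j, jac F y i j * w j := by
  have hw : w = ∑ j, w j • (Pi.single j (1:ℝ) : Fin n → ℝ) := by
    conv_lhs => rw [← Finset.univ_sum_single w]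
    congr 1; funext j
    rw [← Pi.single_smul j (w j) 1, smul_eq_mul, mul_one]
  conv_lhs => rw [hw]
  rw [map_sum]
  simp only [map_smul]
  rw [Finset.sum_apply]
  simp only [Pi.smul_apply, smul_eq_mul]
  apply Finset.sum_congr rfl
  intro j _
  rw [jac, mul_comm]

/-- Mean-value representation with averaged Jacobian. -/
lemma exists_avg_jac {F : (Fin n → ℝ) → (Fin n → ℝ)} (hF : ContDiff ℝ 1 F)
    (u v : Fin n → ℝ) :
    ∃ B : Matrix (Fin n) (Fin n) ℝ,
      (∀ i, F u i - F v i = ∑ j, B i j * (u j - v j)) ∧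
      (∀ i j, B i j = ∫ t in (0:ℝ)..1, jac F (v + t • (u - v)) i j) := by
  set w := u - v with hw
  refine ⟨fun i j => ∫ t in (0:ℝ)..1, jac F (v + t • w) i j, fun i => ?_, fun i j => rfl⟩
  have hderiv : ∀ t ∈ Set.uIcc (0:ℝ) 1,
      HasDerivAt (fun t : ℝ => F (v + t • w) i)
        ((fun t : ℝ => ∑ j, jac F (v + t • w) i j * w j) t) t := by
    intro t _
    have hpath : HasDerivAt (fun t : ℝ => v + t • w) w t := by
      simpa using (HasDerivAt.const_add v ((hasDerivAt_id t).smul_const w))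
    have hf : HasFDerivAt F (fderiv ℝ F (v + t • w)) (v + t • w) :=
      (hF.differentiable one_ne_zero (v + t • w)).hasFDerivAt
    have hcomp : HasDerivAt (fun t : ℝ => F (v + t • w)) (fderiv ℝ F (v + t • w) w) t :=
      hf.comp_hasDerivAt t hpath
    have hproj : HasDerivAt (fun t : ℝ => F (v + t • w) i) ((fderiv ℝ F (v + t • w) w) i) t := by
      have := (ContinuousLinearMap.proj (R := ℝ) (φ := fun _ : Fin n => ℝ) i).hasFDerivAt.comp_hasDerivAt t hcomp
      exact this
    rw [fderiv_apply_eq_sum hF] at hproj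
    exact hproj
  have hint : IntervalIntegrable (fun t : ℝ => ∑ j, jac F (v + t • w) i j * w j)
      MeasureTheory.volume 0 1 := by
    apply Continuous.intervalIntegrable
    exact continuous_finset_sum _ fun j _ => (jac_cont hF v w i j).mul continuous_const
  have := intervalIntegral.integral_eq_sub_of_hasDerivAt hderiv hint
  have hres : ∫ t in (0:ℝ)..1, ∑ j, jac F (v + t • w) i j * w j = F u i - F v i := by
    rw [this]
    norm_num [hw]
  rw [← hres, intervalIntegral.integral_finset_sum
    (fun j _ => (show IntervalIntegrable (fun t : ℝ => jac F (v + t • w) i j * w j) MeasureTheory.volume 0 1 from ((jac_cont hF v w i j).mul continuous_const).intervalIntegrable 0 1))]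
  apply Finset.sum_congr rfl
  intro j _
  rw [intervalIntegral.integral_mul_const]
  simp [hw]

end JacLemmas

section Estimates
variable {n : ℕ} {η : Fin n → ℝ}

/-- Averaged Jacobian with all needed properties. -/
lemma avg_jac_props (hη : ∀ i, 0 < η i) {F : (Fin n → ℝ) → (Fin n → ℝ)}
    (hF : ContDiff ℝ 1 F) (hmono : ∀ y, logNorm η (-(jac F y)) ≤ 0)
    {d : ℝ} (hdiag : ∀ y i, jac F y i i ≤ d) (u v : Fin n → ℝ) :
    ∃ B : Matrix (Fin n) (Fin n) ℝ,
      (∀ i, F u i - F v i = ∑ j, B i j * (u j - v j)) ∧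
      (∀ i, ∑ j ∈ Finset.univ.erase i, (η j / η i) * |B i j| ≤ B i i) ∧
      (∀ i, B i i ≤ d) := by
  obtain ⟨B, hrep, hBdef⟩ := exists_avg_jac hF u v
  set w := u - v with hw
  have hcont : ∀ i j, Continuous fun t : ℝ => jac F (v + t • w) i j := fun i j => jac_cont hF v w i j
  refine ⟨B, hrep, fun i => ?_, fun i => ?_⟩
  · have habs : ∀ j, |B i j| ≤ ∫ t in (0:ℝ)..1, |jac F (v + t • w) i j| := by
      intro j
      rw [hBdef]
      exact intervalIntegral.abs_integral_le_integral_abs zero_le_one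
    have hintabs : ∀ j, IntervalIntegrable (fun t => |jac F (v + t • w) i j|)
        MeasureTheory.volume 0 1 := fun j => ((hcont i j).abs).intervalIntegrable 0 1
    calc ∑ j ∈ Finset.univ.erase i, (η j / η i) * |B i j|
        ≤ ∑ j ∈ Finset.univ.erase i, (η j / η i) *
            ∫ t in (0:ℝ)..1, |jac F (v + t • w) i j| := by
          apply Finset.sum_le_sum
          intro j _
          exact mul_le_mul_of_nonneg_left (habs j)
            (div_nonneg (hη j).le (hη i).le)
      _ = ∫ t in (0:ℝ)..1, ∑ j ∈ Finset.univ.erase i,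
            (η j / η i) * |jac F (v + t • w) i j| := by
          rw [intervalIntegral.integral_finset_sum]
          · apply Finset.sum_congr rfl
            intro j _
            rw [intervalIntegral.integral_const_mul]
          · exact fun j _ => ((hintabs j).const_mul _)
      _ ≤ ∫ t in (0:ℝ)..1, jac F (v + t • w) i i := by
          apply intervalIntegral.integral_mono_on zero_le_one
          · apply Continuous.intervalIntegrable
            exact continuous_finset_sum _ fun j _ => continuous_const.mul (hcont i j).abs
          · exact (hcont i i).intervalIntegrable 0 1
          · exact fun t _ => row_dominance hη (hmono (v + t • w)) i
      _ = B i i := (hBdef i i).symm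
  · rw [hBdef]
    calc (∫ t in (0:ℝ)..1, jac F (v + t • w) i i)
        ≤ ∫ _ in (0:ℝ)..1, d := by
          apply intervalIntegral.integral_mono_on zero_le_one
            ((hcont i i).intervalIntegrable 0 1)
            (intervalIntegrable_const)
          exact fun t _ => hdiag (v + t • w) i
      _ = d := by simp

/-- Attained maximum of the weighted norm. -/
lemma wNorm_attained [Nonempty (Fin n)] (hη : ∀ i, 0 < η i) (w : Fin n → ℝ) :
    ∃ i₀, |w i₀| = η i₀ * wNorm η w := by
  obtain ⟨i₀, hi₀⟩ := Finite.exists_max (fun i => |w i| / η i)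
  refine ⟨i₀, ?_⟩
  have h1 : wNorm η w = |w i₀| / η i₀ :=
    le_antisymm (ciSup_le hi₀) (le_wNorm hη w i₀)
  rw [h1, eq_comm, mul_div_assoc', mul_comm, mul_div_assoc, div_self (hη i₀).ne', mul_one]

/-- `I + αF` is expansive w.r.t. the weighted norm. -/
lemma resolvent_expand (hη : ∀ i, 0 < η i) {F : (Fin n → ℝ) → (Fin n → ℝ)}
    (hF : ContDiff ℝ 1 F) (hmono : ∀ y, logNorm η (-(jac F y)) ≤ 0)
    {d : ℝ} (hdiag : ∀ y i, jac F y i i ≤ d)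
    {α : ℝ} (hα0 : 0 < α) (u v : Fin n → ℝ) :
    wNorm η (u - v) ≤ wNorm η ((u + α • F u) - (v + α • F v)) := by
  rcases isEmpty_or_nonempty (Fin n) with he | he
  · rw [show (u - v) = 0 from Subsingleton.elim _ _]
    rw [show ((u + α • F u) - (v + α • F v)) = 0 from Subsingleton.elim _ _]
  obtain ⟨B, hrep, hdom, _⟩ := avg_jac_props hη hF hmono hdiag u v
  set w := u - v with hw
  set m := wNorm η w with hm
  obtain ⟨i₀, hi₀⟩ := wNorm_attained hη w
  have hm0 : 0 ≤ m := wNorm_nonneg hη w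
  have hD0 : 0 ≤ B i₀ i₀ := le_trans (Finset.sum_nonneg fun j _ =>
    mul_nonneg (div_nonneg (hη j).le (hη i₀).le) (abs_nonneg _)) (hdom i₀)
  -- the i₀ coordinate of the image
  have hcoord : ((u + α • F u) - (v + α • F v)) i₀
      = (1 + α * B i₀ i₀) * w i₀ + α * ∑ j ∈ Finset.univ.erase i₀, B i₀ j * w j := by
    have : ((u + α • F u) - (v + α • F v)) i₀ = w i₀ + α * (F u i₀ - F v i₀) := by
      simp [hw]; ring
    rw [this, hrep i₀]
    rw [← Finset.add_sum_erase _ _ (Finset.mem_univ i₀)]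
    simp only [hw, Pi.sub_apply, mul_sub]
    ring
  have hS : |∑ j ∈ Finset.univ.erase i₀, B i₀ j * w j| ≤ B i₀ i₀ * (η i₀ * m) := by
    calc |∑ j ∈ Finset.univ.erase i₀, B i₀ j * w j|
        ≤ ∑ j ∈ Finset.univ.erase i₀, |B i₀ j * w j| := Finset.abs_sum_le_sum_abs _ _
      _ ≤ ∑ j ∈ Finset.univ.erase i₀, (η j / η i₀) * |B i₀ j| * (η i₀ * m) := by
          apply Finset.sum_le_sum
          intro j _
          rw [abs_mul]
          have h1 : |w j| ≤ η j * m := abs_le_wNorm hη w j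
          have h2 : (η j / η i₀) * |B i₀ j| * (η i₀ * m) = |B i₀ j| * (η j * m) := by
            rw [div_mul_eq_mul_div, div_mul_eq_mul_div, div_eq_iff (hη i₀).ne']
            ring
          rw [h2]
          exact mul_le_mul_of_nonneg_left h1 (abs_nonneg _)
      _ = (∑ j ∈ Finset.univ.erase i₀, (η j / η i₀) * |B i₀ j|) * (η i₀ * m) := by
          rw [Finset.sum_mul]
      _ ≤ B i₀ i₀ * (η i₀ * m) := by
          apply mul_le_mul_of_nonneg_right (hdom i₀)
          exact mul_nonneg (hη i₀).le hm0
  have hlow : η i₀ * m ≤ |((u + α • F u) - (v + α • F v)) i₀| := by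
    rw [hcoord]
    have h1 : |(1 + α * B i₀ i₀) * w i₀| = (1 + α * B i₀ i₀) * (η i₀ * m) := by
      rw [abs_mul, abs_of_nonneg (by positivity : (0:ℝ) ≤ 1 + α * B i₀ i₀), hi₀]
    calc η i₀ * m = (1 + α * B i₀ i₀) * (η i₀ * m) - α * (B i₀ i₀ * (η i₀ * m)) := by ring
      _ ≤ |(1 + α * B i₀ i₀) * w i₀| - |α * ∑ j ∈ Finset.univ.erase i₀, B i₀ j * w j| := by
          rw [h1, abs_mul, abs_of_pos hα0]
          have := mul_le_mul_of_nonneg_left hS hα0.le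
          linarith
      _ ≤ |(1 + α * B i₀ i₀) * w i₀ + α * ∑ j ∈ Finset.univ.erase i₀, B i₀ j * w j| := by
          have := abs_add_le ((1 + α * B i₀ i₀) * w i₀ + α * ∑ j ∈ Finset.univ.erase i₀, B i₀ j * w j)
            (-(α * ∑ j ∈ Finset.univ.erase i₀, B i₀ j * w j))
          simp only [abs_neg] at this
          have h2 : (1 + α * B i₀ i₀) * w i₀ + α * (∑ j ∈ Finset.univ.erase i₀, B i₀ j * w j) +
              -(α * ∑ j ∈ Finset.univ.erase i₀, B i₀ j * w j) = (1 + α * B i₀ i₀) * w i₀ := by ring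
          rw [h2] at this
          linarith
  calc m = (η i₀ * m) / η i₀ := (mul_div_cancel_left₀ m (hη i₀).ne').symm
    _ ≤ |((u + α • F u) - (v + α • F v)) i₀| / η i₀ := by gcongr; exact (hη i₀).le
    _ ≤ wNorm η ((u + α • F u) - (v + α • F v)) := le_wNorm hη _ i₀

end Estimates

section Reflect
variable {n : ℕ} {η : Fin n → ℝ}

/-- `I - αF` is nonexpansive w.r.t. the weighted norm when `α * d ≤ 1`. -/
lemma reflect_nonexp (hη : ∀ i, 0 < η i) {F : (Fin n → ℝ) → (Fin n → ℝ)}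
    (hF : ContDiff ℝ 1 F) (hmono : ∀ y, logNorm η (-(jac F y)) ≤ 0)
    {d : ℝ} (hdiag : ∀ y i, jac F y i i ≤ d)
    {α : ℝ} (hα0 : 0 < α) (hαd : α * d ≤ 1) (u v : Fin n → ℝ) :
    wNorm η ((u - α • F u) - (v - α • F v)) ≤ wNorm η (u - v) := by
  obtain ⟨B, hrep, hdom, hBd⟩ := avg_jac_props hη hF hmono hdiag u v
  set w := u - v with hw
  set m := wNorm η w with hm
  have hm0 : 0 ≤ m := wNorm_nonneg hη w
  refine wNorm_le hη hm0 fun i => ?_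
  have hD0 : 0 ≤ B i i := le_trans (Finset.sum_nonneg fun j _ =>
    mul_nonneg (div_nonneg (hη j).le (hη i).le) (abs_nonneg _)) (hdom i)
  have hαB : α * B i i ≤ 1 := le_trans (mul_le_mul_of_nonneg_left (hBd i) hα0.le) hαd
  have hcoord : ((u - α • F u) - (v - α • F v)) i
      = (1 - α * B i i) * w i - α * ∑ j ∈ Finset.univ.erase i, B i j * w j := by
    have h0 : ((u - α • F u) - (v - α • F v)) i = w i - α * (F u i - F v i) := by
      simp [hw]; ring
    rw [h0, hrep i]
    rw [← Finset.add_sum_erase _ _ (Finset.mem_univ i)]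
    simp only [hw, Pi.sub_apply, mul_sub]
    ring
  have hS : |∑ j ∈ Finset.univ.erase i, B i j * w j| ≤ B i i * (η i * m) := by
    calc |∑ j ∈ Finset.univ.erase i, B i j * w j|
        ≤ ∑ j ∈ Finset.univ.erase i, |B i j * w j| := Finset.abs_sum_le_sum_abs _ _
      _ ≤ ∑ j ∈ Finset.univ.erase i, (η j / η i) * |B i j| * (η i * m) := by
          apply Finset.sum_le_sum
          intro j _
          rw [abs_mul]
          have h1 : |w j| ≤ η j * m := abs_le_wNorm hη w j
          have h2 : (η j / η i) * |B i j| * (η i * m) = |B i j| * (η j * m) := by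
            rw [div_mul_eq_mul_div, div_mul_eq_mul_div, div_eq_iff (hη i).ne']
            ring
          rw [h2]
          exact mul_le_mul_of_nonneg_left h1 (abs_nonneg _)
      _ = (∑ j ∈ Finset.univ.erase i, (η j / η i) * |B i j|) * (η i * m) := by
          rw [Finset.sum_mul]
      _ ≤ B i i * (η i * m) := by
          apply mul_le_mul_of_nonneg_right (hdom i)
          exact mul_nonneg (hη i).le hm0
  rw [hcoord]
  have h1 : |(1 - α * B i i) * w i| ≤ (1 - α * B i i) * (η i * m) := by
    rw [abs_mul, abs_of_nonneg (by linarith : (0:ℝ) ≤ 1 - α * B i i)]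
    exact mul_le_mul_of_nonneg_left (abs_le_wNorm hη w i) (by linarith)
  have h2 : |α * ∑ j ∈ Finset.univ.erase i, B i j * w j| ≤ α * (B i i * (η i * m)) := by
    rw [abs_mul, abs_of_pos hα0]
    exact mul_le_mul_of_nonneg_left hS hα0.le
  calc |(1 - α * B i i) * w i - α * ∑ j ∈ Finset.univ.erase i, B i j * w j|
      ≤ |(1 - α * B i i) * w i| + |α * ∑ j ∈ Finset.univ.erase i, B i j * w j| := abs_sub _ _
    _ ≤ (1 - α * B i i) * (η i * m) + α * (B i i * (η i * m)) := add_le_add h1 h2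
    _ = η i * m := by ring

end Reflect

section GK
variable {n : ℕ} {η : Fin n → ℝ}

/-- Asymptotic regularity of Krasnoselskii-Mann iterations (Goebel–Kirk argument). -/
lemma asymptotic_regularity (hη : ∀ i, 0 < η i) (z s : ℕ → Fin n → ℝ)
    (hzs : ∀ k, (2:ℝ) • z (k+1) = z k + s k)
    (hnon : ∀ k l, wNorm η (s k - s l) ≤ wNorm η (z k - z l))
    (M : ℝ) (hM : ∀ k l, wNorm η (s k - z l) ≤ M) :
    Tendsto (fun k => wNorm η (s k - z k)) atTop (nhds 0) := by
  set b : ℕ → ℝ := fun k => wNorm η (s k - z k) with hb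
  have hbnn : ∀ k, 0 ≤ b k := fun k => wNorm_nonneg hη _
  have hw2 : ∀ v : Fin n → ℝ, wNorm η ((2:ℝ) • v) = 2 * wNorm η v :=
    fun v => by rw [wNorm_smul hη (by norm_num)]
  have idA : ∀ k, (2:ℝ) • (z (k+1) - z k) = s k - z k := by
    intro k; rw [smul_sub, hzs k, two_smul]; abel
  have idC : ∀ k, (2:ℝ) • (s (k+1) - z (k+1)) = (2:ℝ) • (s (k+1) - s k) + (s k - z k) := by
    intro k; rw [smul_sub, smul_sub, hzs k, two_smul, two_smul]; abel
  have hzstep : ∀ k, wNorm η (z (k+1) - z k) = b k / 2 := by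
    intro k
    have := congrArg (wNorm η) (idA k)
    rw [hw2] at this
    rw [hb]; linarith [this]
  have hanti : ∀ k, b (k+1) ≤ b k := by
    intro k
    have h1 : 2 * b (k+1) ≤ 2 * wNorm η (s (k+1) - s k) + b k := by
      have := congrArg (wNorm η) (idC k)
      rw [hw2] at this
      calc 2 * b (k+1) = wNorm η ((2:ℝ) • (s (k+1) - s k) + (s k - z k)) := this
        _ ≤ wNorm η ((2:ℝ) • (s (k+1) - s k)) + wNorm η (s k - z k) := wNorm_add_le hη _ _
        _ = 2 * wNorm η (s (k+1) - s k) + b k := by rw [hw2]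
    have h2 : wNorm η (s (k+1) - s k) ≤ wNorm η (z (k+1) - z k) := hnon _ _
    have h3 := hzstep k
    linarith
  have hantiM : Antitone b := antitone_nat_of_succ_le hanti
  -- distance between iterates
  have key2 : ∀ m i, wNorm η (z (i+m) - z i) ≤ (m / 2 : ℝ) * b i := by
    intro m
    induction m with
    | zero => intro i; simp [wNorm_zero hη]
    | succ m ih =>
      intro i
      have h1 : wNorm η (z (i+m+1) - z i) ≤ wNorm η (z (i+m+1) - z (i+m)) + wNorm η (z (i+m) - z i) :=
        wNorm_sub_le hη _ _ _
      have h2 := hzstep (i+m)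
      have h3 : b (i+m) ≤ b i := hantiM (Nat.le_add_right i m)
      have h4 := ih i
      have : wNorm η (z (i + (m+1)) - z i) = wNorm η (z (i+m+1) - z i) := by
        rw [← Nat.add_assoc]
      rw [this]
      push_cast
      rw [h2] at h1
      linarith
  -- the Goebel-Kirk inequality
  have cl : ∀ (N i : ℕ), (1 + (N:ℝ)/2) * b i ≤ wNorm η (s (i+N) - z i) + 2^N * (b i - b (i+N)) := by
    intro N
    induction N with
    | zero => intro i; simp; exact le_rfl
    | succ N ih =>
      intro i
      have idD : s (i+N+1) - z i = (2:ℝ) • (s (i+N+1) - z (i+1)) - (s (i+N+1) - s i) := by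
        rw [smul_sub, hzs i, two_smul]; abel
      have key1 : 2 * wNorm η (s (i+N+1) - z (i+1))
          ≤ wNorm η (s (i+N+1) - z i) + wNorm η (z (i+N+1) - z i) := by
        have h0 : (2:ℝ) • (s (i+N+1) - z (i+1)) = (s (i+N+1) - z i) + (s (i+N+1) - s i) := by
          rw [idD]; abel
        have := congrArg (wNorm η) h0
        rw [hw2] at this
        calc 2 * wNorm η (s (i+N+1) - z (i+1))
            = wNorm η ((s (i+N+1) - z i) + (s (i+N+1) - s i)) := this
          _ ≤ wNorm η (s (i+N+1) - z i) + wNorm η (s (i+N+1) - s i) := wNorm_add_le hη _ _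
          _ ≤ wNorm η (s (i+N+1) - z i) + wNorm η (z (i+N+1) - z i) := by
              have := hnon (i+N+1) i
              linarith
      have hkey2 : wNorm η (z (i+N+1) - z i) ≤ ((N+1:ℕ) / 2 : ℝ) * b i := by
        have := key2 (N+1) i
        rw [← Nat.add_assoc] at this
        exact this
      have hih := ih (i+1)
      have harr : i + 1 + N = i + N + 1 := by omega
      rw [harr] at hih
      have hb1 : b (i+1) ≤ b i := hanti i
      have hbM : b (i+N+1) ≤ b (i+1) := hantiM (by omega)
      have hpowN : N + 2 ≤ 2^(N+1) := Nat.succ_le_of_lt ((Nat.lt_two_pow_self (n := N+1)))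
      have hpow : (N:ℝ) + 2 ≤ 2^(N+1) := by exact_mod_cast hpowN
      have h2pow : (2:ℝ)^(N+1) = 2 * 2^N := by rw [pow_succ]; ring
      rw [show i + (N+1) = i + N + 1 from by omega]
      push_cast at hih hkey2 ⊢
      nlinarith [key1, hkey2, hih, h2pow,
        mul_nonneg (by linarith : (0:ℝ) ≤ 2^(N+1) - ((N:ℝ)+2)) (by linarith : (0:ℝ) ≤ b i - b (i+1))]
  -- pass to the limit
  have hbdd : BddBelow (Set.range b) := ⟨0, fun y ⟨k, hk⟩ => hk ▸ hbnn k⟩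
  set L : ℝ := ⨅ k, b k with hL
  have htend : Tendsto b atTop (nhds L) := tendsto_atTop_ciInf hantiM hbdd
  have hL0 : 0 ≤ L := le_ciInf hbnn
  have hM0 : 0 ≤ M := le_trans (hbnn 0) (hM 0 0)
  have hLM : ∀ N : ℕ, (1 + (N:ℝ)/2) * L ≤ M := by
    intro N
    have hshift : Tendsto (fun i => b (i + N)) atTop (nhds L) :=
      htend.comp (tendsto_add_atTop_nat N)
    have T : Tendsto (fun i => M + 2^N * (b i - b (i+N))) atTop (nhds (M + 2^N * (L - L))) := by
      exact tendsto_const_nhds.add ((tendsto_const_nhds.mul ((htend.sub hshift))))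
    have heven : ∀ i, (1 + (N:ℝ)/2) * L ≤ M + 2^N * (b i - b (i+N)) := by
      intro i
      have hLb : L ≤ b i := ciInf_le hbdd i
      have h1 : (1 + (N:ℝ)/2) * L ≤ (1 + (N:ℝ)/2) * b i := by
        apply mul_le_mul_of_nonneg_left hLb
        positivity
      have h2 := cl N i
      have h3 := hM (i+N) i
      linarith
    have := ge_of_tendsto T (Filter.Eventually.of_forall heven)
    have hsimp : M + 2^N * (L - L) = M := by ring
    rw [hsimp] at this
    exact this
  have hLz : L = 0 := by
    by_contra hne
    have hLpos : 0 < L := lt_of_le_of_ne hL0 (Ne.symm hne)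
    obtain ⟨N, hN⟩ := exists_nat_gt (2 * M / L)
    have := hLM N
    have h2 : 2 * M / L < (N:ℝ) := hN
    rw [div_lt_iff₀ hLpos] at h2
    nlinarith
  rw [← hLz]
  exact htend

end GK

section Chain
variable {n : ℕ} {η : Fin n → ℝ}

/-- One Douglas-Rachford "step" is nonexpansive, stated with explicit resolvent points. -/
lemma dr_chain (hη : ∀ i, 0 < η i)
    {F G : (Fin n → ℝ) → (Fin n → ℝ)} (hF : ContDiff ℝ 1 F) (hG : ContDiff ℝ 1 G)
    (hmonoF : ∀ y, logNorm η (-(jac F y)) ≤ 0) (hmonoG : ∀ y, logNorm η (-(jac G y)) ≤ 0)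
    {dF dG : ℝ} (hdiagF : ∀ y i, jac F y i i ≤ dF) (hdiagG : ∀ y i, jac G y i i ≤ dG)
    {α : ℝ} (hα0 : 0 < α) (hαF : α * dF ≤ 1) (hαG : α * dG ≤ 1)
    (p q p' q' a b : Fin n → ℝ)
    (hpa : p + α • G p = a) (hqb : q + α • G q = b)
    (hp' : p' + α • F p' = (2:ℝ) • p - a) (hq' : q' + α • F q' = (2:ℝ) • q - b) :
    wNorm η (p - q) ≤ wNorm η (a - b) ∧
    wNorm η ((p' - α • F p') - (q' - α • F q')) ≤ wNorm η (a - b) := by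
  have hrefl_p : (2:ℝ) • p - a = p - α • G p := by rw [← hpa, two_smul]; abel
  have hrefl_q : (2:ℝ) • q - b = q - α • G q := by rw [← hqb, two_smul]; abel
  have step1 : wNorm η (p - q) ≤ wNorm η (a - b) := by
    have := resolvent_expand hη hG hmonoG hdiagG hα0 p q
    rwa [hpa, hqb] at this
  refine ⟨step1, ?_⟩
  have step2 : wNorm η ((p - α • G p) - (q - α • G q)) ≤ wNorm η (p - q) :=
    reflect_nonexp hη hG hmonoG hdiagG hα0 hαG p q
  have step3 : wNorm η (p' - q') ≤ wNorm η ((p - α • G p) - (q - α • G q)) := by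
    have := resolvent_expand hη hF hmonoF hdiagF hα0 p' q'
    rwa [hp', hq', hrefl_p, hrefl_q] at this
  have step4 : wNorm η ((p' - α • F p') - (q' - α • F q')) ≤ wNorm η (p' - q') :=
    reflect_nonexp hη hF hmonoF hdiagF hα0 hαF p' q'
  linarith

end Chain

/-- Douglas-Rachford splitting: weakly monotone case. -/
theorem stmt_15 {n : ℕ} (η : Fin n → ℝ) (hη : ∀ i, 0 < η i)
    (F : (Fin n → ℝ) → (Fin n → ℝ)) (hF : ContDiff ℝ 1 F)
    (LF : ℝ) (hLF : ∀ x y, wNorm η (F x - F y) ≤ LF * wNorm η (x - y))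
    (dF : ℝ) (hdF : 0 < dF) (hdiagF : ∀ x i, jac F x i i ≤ dF)
    (G : (Fin n → ℝ) → (Fin n → ℝ)) (hG : ContDiff ℝ 1 G)
    (LG : ℝ) (hLG : ∀ x y, wNorm η (G x - G y) ≤ LG * wNorm η (x - y))
    (dG : ℝ) (hdG : 0 < dG) (hdiagG : ∀ x i, jac G x i i ≤ dG)
    (hmonoF : ∀ x, logNorm η (-(jac F x)) ≤ 0)
    (hmonoG : ∀ x, logNorm η (-(jac G x)) ≤ 0)
    (hzero : ∃ z : Fin n → ℝ, F z + G z = 0)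
    (α : ℝ) (hα : α ∈ Set.Ioc (0 : ℝ) (min (1 / dF) (1 / dG)))
    (x xh z zh : ℕ → (Fin n → ℝ))
    (h1 : ∀ k, xh k + α • G (xh k) = z k)
    (h2 : ∀ k, zh k = (2 : ℝ) • xh k - z k)
    (h3 : ∀ k, x (k + 1) + α • F (x (k + 1)) = zh k)
    (h4 : ∀ k, z (k + 1) = z k + x (k + 1) - xh k) :
    ∃ xs : Fin n → ℝ, F xs + G xs = 0 ∧ Tendsto x atTop (nhds xs) := by
  obtain ⟨hα0, hαmin⟩ := hα
  have hαF : α * dF ≤ 1 := by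
    have hle : α ≤ 1/dF := le_trans hαmin (min_le_left _ _)
    rw [le_div_iff₀ hdF] at hle
    exact hle
  have hαG : α * dG ≤ 1 := by
    have hle : α ≤ 1/dG := le_trans hαmin (min_le_right _ _)
    rw [le_div_iff₀ hdG] at hle
    exact hle
  obtain ⟨xbar, hxbar⟩ := hzero
  -- constants
  set Cη : ℝ := ∑ i, η i with hCη
  set Cη' : ℝ := ∑ i, (η i)⁻¹ with hCη'
  have hCη0 : 0 ≤ Cη := Finset.sum_nonneg fun i _ => (hη i).le
  have hCη'0 : 0 ≤ Cη' := Finset.sum_nonneg fun i _ => (inv_nonneg.2 (hη i).le)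
  -- the reflected sequence
  set s : ℕ → Fin n → ℝ := fun k => x (k+1) - α • F (x (k+1)) with hs
  have hp : ∀ k, x (k+1) + α • F (x (k+1)) = (2:ℝ) • xh k - z k := by
    intro k; rw [h3 k, h2 k]
  have hzs : ∀ k, (2:ℝ) • z (k+1) = z k + s k := by
    intro k
    have e1 : s k = (2:ℝ) • x (k+1) - ((2:ℝ) • xh k - z k) := by
      rw [hs, ← hp k]
      simp only [two_smul]
      abel
    rw [h4 k, e1]
    simp only [two_smul]
    abel
  have hsz : ∀ k, (2:ℝ) • (x (k+1) - xh k) = s k - z k := by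
    intro k
    have e1 : s k = (2:ℝ) • x (k+1) - ((2:ℝ) • xh k - z k) := by
      rw [hs, ← hp k]
      simp only [two_smul]
      abel
    rw [e1]
    simp only [two_smul]
    abel
  -- pairwise nonexpansiveness
  have chainKL : ∀ k l, wNorm η (xh k - xh l) ≤ wNorm η (z k - z l) ∧
      wNorm η (s k - s l) ≤ wNorm η (z k - z l) := by
    intro k l
    have := dr_chain hη hF hG hmonoF hmonoG hdiagF hdiagG hα0 hαF hαG
      (xh k) (xh l) (x (k+1)) (x (l+1)) (z k) (z l) (h1 k) (h1 l) (hp k) (hp l)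
    exact this
  -- fixed point data from xbar
  have hGbar : G xbar = -F xbar := by
    rw [eq_neg_iff_add_eq_zero, add_comm]
    exact hxbar
  set zbar : Fin n → ℝ := xbar + α • G xbar with hzbar
  have hbar1 : xbar + α • G xbar = zbar := rfl
  have hbar2 : xbar + α • F xbar = (2:ℝ) • xbar - zbar := by
    rw [hzbar, hGbar, smul_neg]
    simp only [two_smul]
    abel
  have hsbar : xbar - α • F xbar = zbar := by
    rw [hzbar, hGbar, smul_neg]
    abel
  have chainK : ∀ k, wNorm η (xh k - xbar) ≤ wNorm η (z k - zbar) ∧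
      wNorm η (s k - zbar) ≤ wNorm η (z k - zbar) := by
    intro k
    have := dr_chain hη hF hG hmonoF hmonoG hdiagF hdiagG hα0 hαF hαG
      (xh k) xbar (x (k+1)) xbar (z k) zbar (h1 k) hbar1 (hp k) hbar2
    rwa [hsbar] at this
  -- Fejér monotonicity machinery
  have fejer : ∀ w : Fin n → ℝ, (∀ k, wNorm η (s k - w) ≤ wNorm η (z k - w)) →
      ∀ k l, k ≤ l → wNorm η (z l - w) ≤ wNorm η (z k - w) := by
    intro w hw
    have hsucc : ∀ k, wNorm η (z (k+1) - w) ≤ wNorm η (z k - w) := by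
      intro k
      have hid : (2:ℝ) • (z (k+1) - w) = (z k - w) + (s k - w) := by
        rw [smul_sub, hzs k]
        simp only [two_smul]
        abel
      have := congrArg (wNorm η) hid
      rw [wNorm_smul hη (by norm_num : (0:ℝ) ≤ 2)] at this
      have htri := wNorm_add_le hη (z k - w) (s k - w)
      have := this.le.trans htri
      have hk := hw k
      linarith
    exact fun k l hkl => antitone_nat_of_succ_le (f := fun k => wNorm η (z k - w)) hsucc hkl
  have fejerBar := fejer zbar (fun k => (chainK k).2)
  -- boundedness
  set R : ℝ := Cη * wNorm η (z 0 - zbar) + ‖zbar‖ with hR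
  have hmem : ∀ k, z k ∈ Metric.closedBall (0 : Fin n → ℝ) R := by
    intro k
    rw [Metric.mem_closedBall, dist_zero_right]
    have h5 : ‖z k‖ ≤ ‖z k - zbar‖ + ‖zbar‖ := by
      calc ‖z k‖ = ‖(z k - zbar) + zbar‖ := by rw [sub_add_cancel]
        _ ≤ ‖z k - zbar‖ + ‖zbar‖ := norm_add_le _ _
    have h6 : ‖z k - zbar‖ ≤ Cη * wNorm η (z k - zbar) := norm_le_wNorm hη _
    have h7 : wNorm η (z k - zbar) ≤ wNorm η (z 0 - zbar) := fejerBar 0 k (Nat.zero_le k)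
    have h8 : Cη * wNorm η (z k - zbar) ≤ Cη * wNorm η (z 0 - zbar) :=
      mul_le_mul_of_nonneg_left h7 hCη0
    rw [hR]; linarith
  -- asymptotic regularity
  have hM : ∀ k l, wNorm η (s k - z l) ≤ 2 * wNorm η (z 0 - zbar) := by
    intro k l
    have t1 : wNorm η (s k - z l) ≤ wNorm η (s k - zbar) + wNorm η (zbar - z l) :=
      wNorm_sub_le hη _ _ _
    have t2 : wNorm η (s k - zbar) ≤ wNorm η (z k - zbar) := (chainK k).2
    have t3 : wNorm η (zbar - z l) = wNorm η (z l - zbar) := wNorm_sub_comm hη _ _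
    have t4 : wNorm η (z k - zbar) ≤ wNorm η (z 0 - zbar) := fejerBar 0 k (Nat.zero_le k)
    have t5 : wNorm η (z l - zbar) ≤ wNorm η (z 0 - zbar) := fejerBar 0 l (Nat.zero_le l)
    linarith
  have hreg : Tendsto (fun k => wNorm η (s k - z k)) atTop (nhds 0) :=
    asymptotic_regularity hη z s hzs (fun k l => (chainKL k l).2) _ hM
  -- x (k+1) - xh k → 0
  have hdiff : Tendsto (fun k => x (k+1) - xh k) atTop (nhds 0) := by
    rw [tendsto_zero_iff_norm_tendsto_zero]
    apply squeeze_zero (fun k => norm_nonneg _) (g := fun k => Cη * wNorm η (s k - z k))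
    · intro k
      have e1 : wNorm η ((2:ℝ) • (x (k+1) - xh k)) = wNorm η (s k - z k) := by rw [hsz k]
      rw [wNorm_smul hη (by norm_num : (0:ℝ) ≤ 2)] at e1
      have e2 : ‖x (k+1) - xh k‖ ≤ Cη * wNorm η (x (k+1) - xh k) := norm_le_wNorm hη _
      have e3 : wNorm η (x (k+1) - xh k) ≤ wNorm η (s k - z k) := by
        have hnn := wNorm_nonneg hη (x (k+1) - xh k)
        linarith
      calc ‖x (k+1) - xh k‖ ≤ Cη * wNorm η (x (k+1) - xh k) := e2
        _ ≤ Cη * wNorm η (s k - z k) := mul_le_mul_of_nonneg_left e3 hCη0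
    · have := hreg.const_mul Cη
      simpa using this
  -- convergent subsequence of z
  obtain ⟨w, -, φ, hφ, hzφ⟩ := tendsto_subseq_of_bounded
    (Metric.isBounded_closedBall (x := (0 : Fin n → ℝ)) (r := R)) hmem
  have hφtop : Tendsto φ atTop atTop := hφ.tendsto_atTop
  -- xh ∘ φ is Cauchy
  have hxhc : CauchySeq (xh ∘ φ) := by
    have hzc : CauchySeq (z ∘ φ) := hzφ.cauchySeq
    rw [Metric.cauchySeq_iff] at hzc ⊢
    intro ε hε
    set K : ℝ := Cη * Cη' + 1 with hK
    have hK0 : 0 < K := by positivity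
    obtain ⟨N, hN⟩ := hzc (ε / K) (by positivity)
    refine ⟨N, fun m hm l hl => ?_⟩
    have hd : dist ((xh ∘ φ) m) ((xh ∘ φ) l) ≤ K * dist ((z ∘ φ) m) ((z ∘ φ) l) := by
      simp only [Function.comp_apply, dist_eq_norm]
      calc ‖xh (φ m) - xh (φ l)‖ ≤ Cη * wNorm η (xh (φ m) - xh (φ l)) := norm_le_wNorm hη _
        _ ≤ Cη * wNorm η (z (φ m) - z (φ l)) :=
            mul_le_mul_of_nonneg_left (chainKL (φ m) (φ l)).1 hCη0
        _ ≤ Cη * (Cη' * ‖z (φ m) - z (φ l)‖) :=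
            mul_le_mul_of_nonneg_left (wNorm_le_norm hη _) hCη0
        _ ≤ K * ‖z (φ m) - z (φ l)‖ := by
            rw [← mul_assoc]
            apply mul_le_mul_of_nonneg_right _ (norm_nonneg _)
            rw [hK]; linarith
    have := hN m hm l hl
    calc dist ((xh ∘ φ) m) ((xh ∘ φ) l) ≤ K * dist ((z ∘ φ) m) ((z ∘ φ) l) := hd
      _ < K * (ε / K) := by
          apply mul_lt_mul_of_pos_left _ hK0
          exact this
      _ = ε := by field_simp
  obtain ⟨u, hu⟩ := cauchySeq_tendsto_of_complete hxhc
  -- identify the limits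
  have hGu : u + α • G u = w := by
    have hcont : Tendsto (fun j => xh (φ j) + α • G (xh (φ j))) atTop (nhds (u + α • G u)) := by
      have hGc : Tendsto (fun j => G (xh (φ j))) atTop (nhds (G u)) :=
        ((hG.continuous.tendsto u).comp hu)
      exact hu.add (hGc.const_smul α)
    have heq : (fun j => xh (φ j) + α • G (xh (φ j))) = fun j => z (φ j) := by
      funext j; exact h1 (φ j)
    rw [heq] at hcont
    exact tendsto_nhds_unique hcont hzφ
  have hxφ : Tendsto (fun j => x (φ j + 1)) atTop (nhds u) := by
    have hd : Tendsto ((fun k => x (k + 1) - xh k) ∘ φ) atTop (nhds 0) :=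
      hdiff.comp hφtop
    have hsum := hu.add hd
    simp only [add_zero] at hsum
    apply hsum.congr
    intro j
    simp only [Function.comp_apply]
    abel
  have hFu : u + α • F u = (2:ℝ) • u - w := by
    have hcont : Tendsto (fun j => x (φ j + 1) + α • F (x (φ j + 1)))
        atTop (nhds (u + α • F u)) := by
      have hFc : Tendsto (fun j => F (x (φ j + 1))) atTop (nhds (F u)) :=
        ((hF.continuous.tendsto u).comp hxφ)
      exact hxφ.add (hFc.const_smul α)
    have hrhs : Tendsto (fun j => (2:ℝ) • xh (φ j) - z (φ j)) atTop
        (nhds ((2:ℝ) • u - w)) := (hu.const_smul (2:ℝ)).sub hzφ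
    have heq : (fun j => x (φ j + 1) + α • F (x (φ j + 1)))
        = fun j => (2:ℝ) • xh (φ j) - z (φ j) := by
      funext j; exact hp (φ j)
    rw [heq] at hcont
    exact tendsto_nhds_unique hcont hrhs
  have hFGu : F u + G u = 0 := by
    have h5 : α • (F u + G u) = 0 := by
      have e1 : α • G u = w - u := by
        have := hGu; rw [← this]; abel
      have e2 : α • F u = u - w := by
        have := hFu
        have : α • F u = (2:ℝ) • u - w - u := by rw [← this]; abel
        rw [this]
        simp only [two_smul]
        abel
      rw [smul_add, e1, e2]
      abel
    rcases smul_eq_zero.mp h5 with h | h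
    · exact absurd h (ne_of_gt hα0)
    · exact h
  -- Fejér w.r.t. the cluster point
  have hwF : u - α • F u = w := by
    have e2 : α • F u = u - w := by
      have : α • F u = (2:ℝ) • u - w - u := by rw [← hFu]; abel
      rw [this]; simp only [two_smul]; abel
    rw [e2]; abel
  have chainW : ∀ k, wNorm η (xh k - u) ≤ wNorm η (z k - w) ∧
      wNorm η (s k - w) ≤ wNorm η (z k - w) := by
    intro k
    have hq' : u + α • F u = (2:ℝ) • u - w := hFu
    have := dr_chain hη hF hG hmonoF hmonoG hdiagF hdiagG hα0 hαF hαG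
      (xh k) u (x (k+1)) u (z k) w (h1 k) hGu (hp k) hq'
    rwa [hwF] at this
  have fejerW := fejer w (fun k => (chainW k).2)
  -- wNorm (z k - w) → 0
  have hzw : Tendsto (fun k => wNorm η (z k - w)) atTop (nhds 0) := by
    have hanti : Antitone (fun k => wNorm η (z k - w)) :=
      fun k l hkl => fejerW k l hkl
    have hbdd : BddBelow (Set.range fun k => wNorm η (z k - w)) :=
      ⟨0, fun y ⟨k, hk⟩ => hk ▸ wNorm_nonneg hη _⟩
    have htend := tendsto_atTop_ciInf hanti hbdd
    have hsub : Tendsto (fun j => wNorm η (z (φ j) - w)) atTop (nhds 0) := by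
      apply squeeze_zero (fun j => wNorm_nonneg hη _) (g := fun j => Cη' * ‖z (φ j) - w‖)
      · exact fun j => wNorm_le_norm hη _
      · have : Tendsto (fun j => ‖z (φ j) - w‖) atTop (nhds 0) := by
          rw [← tendsto_zero_iff_norm_tendsto_zero]
          exact (tendsto_sub_nhds_zero_iff).2 hzφ
        have := this.const_mul Cη'
        simpa using this
    have hsub2 : Tendsto (fun j => wNorm η (z (φ j) - w)) atTop
        (nhds (⨅ k, wNorm η (z k - w))) := htend.comp hφtop
    have : (⨅ k, wNorm η (z k - w)) = 0 := tendsto_nhds_unique hsub2 hsub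
    rwa [this] at htend
  -- final convergence
  have hxh_u : Tendsto xh atTop (nhds u) := by
    rw [tendsto_iff_norm_sub_tendsto_zero]
    apply squeeze_zero (fun k => norm_nonneg _) (g := fun k => Cη * wNorm η (z k - w))
    · intro k
      calc ‖xh k - u‖ ≤ Cη * wNorm η (xh k - u) := norm_le_wNorm hη _
        _ ≤ Cη * wNorm η (z k - w) := mul_le_mul_of_nonneg_left (chainW k).1 hCη0
    · have := hzw.const_mul Cη
      simpa using this
  have hx_succ : Tendsto (fun k => x (k + 1)) atTop (nhds u) := by
    have hsum := hxh_u.add hdiff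
    simp only [add_zero] at hsum
    apply hsum.congr
    intro k
    abel
  refine ⟨u, hFGu, ?_⟩
  exact (Filter.tendsto_add_atTop_iff_nat 1).mp hx_succ
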